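/- Let F = ℤ/dℤ, Γ a profinite group, and let E be a 2-extension 0 → B → E₁ → E₂ → A → 0 of finite d-torsion Γ-modules with B and E₂ free as F-modules. Then any two E-diagrams in the category of F-modules — that is, pairs (F, φ) with F = (0 → B → F₁ → E₂ → 0) a short exact sequence of F-modules and φ : E → F a morphism of complexes inducing the identity on B and E₂ — are isomorphic via an isomorphism of short exact sequences F → F' inducing the identity on B and E₂. -/

import Mathlib

open Function

/-- A finite discrete `d`-torsion module over a topological group `Γ`:
a finite `ZMod d`-module with a `Γ`-representation that is continuous for the
discrete topology on the module. -/
structure FdMod (d : ℕ) (Γ : Type) [Group Γ] [TopologicalSpace Γ] : Type 1 where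
  V : Type
  [acg : AddCommGroup V]
  [mod : Module (ZMod d) V]
  [fin : Finite V]
  ρ : Representation (ZMod d) Γ V
  cont : ∀ v : V, @Continuous Γ V _ ⊥ (fun γ => ρ γ v)

attribute [instance] FdMod.acg FdMod.mod FdMod.fin

namespace FdMod

variable {d : ℕ} {Γ : Type} [Group Γ] [TopologicalSpace Γ]

/-- Morphisms: `Γ`-equivariant `ZMod d`-linear maps. -/
def Hom (M N : FdMod d Γ) : Type :=
  {f : M.V →ₗ[ZMod d] N.V // ∀ γ v, f (M.ρ γ v) = N.ρ γ (f v)}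

def idHom (M : FdMod d Γ) : M.Hom M := ⟨LinearMap.id, fun _ _ => rfl⟩

def castHom {M N : FdMod d Γ} (h : M = N) : M.Hom N := by subst h; exact idHom M

def zeroHom (M N : FdMod d Γ) : M.Hom N := ⟨0, by intro γ v; simp⟩

/-- Transport of elements along an equality of objects. -/
def vcast {M N : FdMod d Γ} (h : M = N) (x : M.V) : N.V := cast (congrArg FdMod.V h) x

/-- Freeness as a `ZMod d`-module. -/
def IsFree (M : FdMod d Γ) : Prop :=
  ∃ r : ℕ, Nonempty (M.V ≃ₗ[ZMod d] (Fin r → ZMod d))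

end FdMod
/-- The data of a complex `X 0 → X 1 → ... → X (n+1)` of finite discrete
`d`-torsion `Γ`-modules; an `n`-extension of `X (n+1)` by `X 0` when `IsExt` holds. -/
structure GPre (d : ℕ) (Γ : Type) [Group Γ] [TopologicalSpace Γ] (n : ℕ) : Type 1 where
  X : ℕ → FdMod d Γ
  f : ∀ i, (X i).Hom (X (i + 1))

namespace GPre

variable {d : ℕ} {Γ : Type} [Group Γ] [TopologicalSpace Γ] {n : ℕ}

/-- `E` is an exact extension: `0 → X 0 → ... → X (n+1) → 0` is exact. -/
def IsExt (E : GPre d Γ n) : Prop :=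
  Function.Injective (E.f 0).1 ∧ Function.Surjective (E.f n).1 ∧
    ∀ i, i + 1 ≤ n → ∀ y, (E.f (i + 1)).1 y = 0 ↔ ∃ x, (E.f i).1 x = y

/-- A morphism of `n`-extensions inducing the identity on both ends. -/
def Ladder (E F : GPre d Γ n) : Prop :=
  ∃ (h0 : E.X 0 = F.X 0) (h1 : E.X (n + 1) = F.X (n + 1))
    (φ : ∀ i, (E.X i).Hom (F.X i)),
    (∀ x, (φ 0).1 x = FdMod.vcast h0 x) ∧
    (∀ x, (φ (n + 1)).1 x = FdMod.vcast h1 x) ∧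
    ∀ i, i ≤ n → ∀ x, (φ (i + 1)).1 ((E.f i).1 x) = (F.f i).1 ((φ i).1 x)

/-- One step of the Yoneda equivalence relation between `n`-extensions. -/
def ExtRel (E F : GPre d Γ n) : Prop := E.IsExt ∧ F.IsExt ∧ Ladder E F

/-- Yoneda equivalence of `n`-extensions: the equivalence relation generated by
morphisms of extensions inducing the identity on both ends. -/
def YEquiv (E F : GPre d Γ n) : Prop := Relation.EqvGen ExtRel E F

end GPre

/-- The zero module with trivial action. -/
def zeroFdMod (d : ℕ) (Γ : Type) [Group Γ] [TopologicalSpace Γ] : FdMod d Γ where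
  V := PUnit
  ρ := Representation.trivial (ZMod d) (G := Γ) (V := PUnit)
  cont := fun v => by
    have : @Continuous Γ PUnit _ ⊥ (fun _ => v) := @continuous_const Γ PUnit _ ⊥ v
    simpa using this

section Triv

variable (d : ℕ) (Γ : Type) [Group Γ] [TopologicalSpace Γ] (n : ℕ)

/-- Objects of the trivial ("split") `n`-extension `0 → B → B → 0 → ⋯ → 0 → A → A → 0`. -/
def trivX (A B : FdMod d Γ) : ℕ → FdMod d Γ :=
  fun i => if i ≤ 1 then B else if n ≤ i then A else zeroFdMod d Γ

/-- The trivial `n`-extension of `A` by `B` (for `2 ≤ n`). -/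
def trivGPre (hn : 2 ≤ n) (A B : FdMod d Γ) : GPre d Γ n where
  X := trivX d Γ n A B
  f i :=
    if h : i = 0 then FdMod.castHom (by subst h; simp [trivX]) else
    if h' : i = n then FdMod.castHom (by
      subst h'; simp only [trivX]
      rw [if_neg (by omega), if_pos (by omega), if_neg (by omega), if_pos (by omega)]) else
    FdMod.zeroHom _ _

end Triv

namespace GPre

variable {d : ℕ} {Γ : Type} [Group Γ] [TopologicalSpace Γ] {n : ℕ}

/-- The Yoneda class of the extension `E` is zero, i.e. `E` is Yoneda equivalent
to the trivial extension. -/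
def classZero (hn : 2 ≤ n) (E : GPre d Γ n) : Prop :=
  YEquiv E (trivGPre d Γ n hn (E.X (n + 1)) (E.X 0))

end GPre

section AuxSelfInj

lemma zmod_solve {d : ℕ} [NeZero d] (a b : ZMod d)
    (h : ∀ y : ZMod d, y * a = 0 → y * b = 0) : ∃ x, a * x = b := by
  have hd : 0 < d := Nat.pos_of_ne_zero (NeZero.ne d)
  set g := Nat.gcd (ZMod.val a) d with hg
  have hgd : g ∣ d := Nat.gcd_dvd_right _ _
  have hga : g ∣ ZMod.val a := Nat.gcd_dvd_left _ _
  have hgpos : 0 < g := Nat.gcd_pos_of_pos_right _ hd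
  have hdg : 0 < d / g := Nat.div_pos (Nat.le_of_dvd hd hgd) hgpos
  -- (d/g) * a = 0 in ZMod d
  have key1 : ((d / g : ℕ) : ZMod d) * a = 0 := by
    have : (d / g) * ZMod.val a = (ZMod.val a / g) * d := by
      rcases hga with ⟨k, hk⟩
      rcases hgd with ⟨l, hl⟩
      rw [hk, hl]
      rw [Nat.mul_div_cancel_left _ hgpos, Nat.mul_div_cancel_left _ hgpos]
      ring
    calc ((d / g : ℕ) : ZMod d) * a = (((d / g) * ZMod.val a : ℕ) : ZMod d) := by
          push_cast [ZMod.natCast_val, ZMod.cast_id]; ring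
      _ = (((ZMod.val a / g) * d : ℕ) : ZMod d) := by rw [this]
      _ = 0 := by push_cast [ZMod.natCast_self]; ring
  have key2 : ((d / g : ℕ) : ZMod d) * b = 0 := h _ key1
  have hdvd : d ∣ (d / g) * ZMod.val b := by
    rw [← ZMod.natCast_eq_zero_iff]
    push_cast [ZMod.natCast_val, ZMod.cast_id]
    exact key2
  have hgb : g ∣ ZMod.val b := by
    have h1 : (d / g) * g ∣ (d / g) * ZMod.val b := by
      rwa [Nat.div_mul_cancel hgd]
    exact (Nat.mul_dvd_mul_iff_left hdg).mp h1
  -- Bezout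
  have hbez := Nat.gcd_eq_gcd_ab (ZMod.val a) d
  set u : ZMod d := ((Nat.gcdA (ZMod.val a) d : ℤ) : ZMod d)
  have hgcast : ((g : ℕ) : ZMod d) = a * u := by
    have : ((g : ℤ) : ZMod d) = ((ZMod.val a : ℤ) : ZMod d) * u + ((d : ℤ) : ZMod d) * ((Nat.gcdB (ZMod.val a) d : ℤ) : ZMod d) := by
      rw [← Int.cast_mul, ← Int.cast_mul, ← Int.cast_add, ← hbez]
    push_cast [ZMod.natCast_val, ZMod.cast_id, ZMod.natCast_self] at this ⊢
    simpa using this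
  refine ⟨u * ((ZMod.val b / g : ℕ) : ZMod d), ?_⟩
  have : b = ((g * (ZMod.val b / g) : ℕ) : ZMod d) := by
    rw [Nat.mul_div_cancel' hgb, ZMod.natCast_val, ZMod.cast_id]
  conv_rhs => rw [this]
  push_cast
  rw [hgcast]
  ring

lemma baer_zmod {d : ℕ} [NeZero d] : Module.Baer (ZMod d) (ZMod d) := by
  intro I f
  -- I is principal
  have hsurj : Function.Surjective (Int.castRingHom (ZMod d)) := ZMod.intCast_surjective
  obtain ⟨gz, hgz⟩ : (I.comap (Int.castRingHom (ZMod d))).IsPrincipal :=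
    inferInstance
  have hI : I = Ideal.span {((gz : ℤ) : ZMod d)} := by
    have := Ideal.map_comap_of_surjective (Int.castRingHom (ZMod d)) hsurj I
    rw [← this, hgz]; erw [Ideal.map_span]
    simp
  set a : ZMod d := ((gz : ℤ) : ZMod d)
  have haI : a ∈ I := hI ▸ Ideal.subset_span rfl
  set b : ZMod d := f ⟨a, haI⟩
  have hsol : ∃ x, a * x = b := by
    apply zmod_solve
    intro y hy
    have : y • (⟨a, haI⟩ : I) = (0 : I) := by
      ext; simpa [smul_eq_mul] using hy
    calc y * b = f (y • ⟨a, haI⟩) := by rw [map_smul]; simp [b, smul_eq_mul]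
      _ = 0 := by rw [this, map_zero]
  obtain ⟨x, hx⟩ := hsol
  refine ⟨(LinearMap.mul (ZMod d) (ZMod d)).flip x, ?_⟩
  intro z hz
  rw [hI] at hz
  obtain ⟨c, hc⟩ := Ideal.mem_span_singleton'.mp hz
  have hzI : z ∈ I := hI ▸ hz
  have : (⟨z, hzI⟩ : I) = c • ⟨a, haI⟩ := by ext; simp [← hc, smul_eq_mul]
  calc (LinearMap.mul (ZMod d) (ZMod d)).flip x z = z * x := rfl
    _ = c * (a * x) := by rw [← hc]; ring
    _ = c * b := by rw [hx]
    _ = f ⟨z, hzI⟩ := by rw [this, map_smul]; simp [b, smul_eq_mul]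

lemma extend_free {d : ℕ} [NeZero d] {M N B : Type} [AddCommGroup M] [Module (ZMod d) M]
    [AddCommGroup N] [Module (ZMod d) N] [AddCommGroup B] [Module (ZMod d) B]
    {m : ℕ} (eB : B ≃ₗ[ZMod d] (Fin m → ZMod d))
    (f : M →ₗ[ZMod d] N) (hf : Function.Injective f)
    (g : M →ₗ[ZMod d] B) : ∃ h : N →ₗ[ZMod d] B, ∀ x, h (f x) = g x := by
  have H : ∀ i : Fin m, ∃ h : N →ₗ[ZMod d] ZMod d,
      h ∘ₗ f = LinearMap.proj i ∘ₗ (eB.toLinearMap ∘ₗ g) := fun i =>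
    baer_zmod.extension_property f hf _
  choose h hh using H
  refine ⟨eB.symm.toLinearMap ∘ₗ LinearMap.pi h, fun x => ?_⟩
  have key : ∀ i, h i (f x) = eB (g x) i := fun i => LinearMap.congr_fun (hh i) x
  have : LinearMap.pi h (f x) = eB (g x) := funext key
  simp only [LinearMap.comp_apply, LinearEquiv.coe_coe, this, LinearEquiv.symm_apply_apply]

end AuxSelfInj

/-- uniqueness of `E`-diagrams in degree 2, used in Theorem 4.1 of
the paper.  Let `E = (0 → B → E₁ → E₂ → A → 0)` be a `2`-extension of finite
discrete `d`-torsion `Γ`-modules with `B = E.X 0` and `E₂ = E.X 2` free as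
`ℤ/dℤ`-modules.  Then any two `E`-diagrams in the category of `ℤ/dℤ`-modules,
i.e. pairs `(F₁, φ₁)` of a short exact sequence `0 → B → F₁ → E₂ → 0` of
`ℤ/dℤ`-modules and a morphism of complexes `E → F` inducing the identity on `B`
and `E₂`, are isomorphic via an isomorphism of short exact sequences inducing the
identity on `B` and `E₂`. -/
theorem statement16 (d : ℕ) (hd : 2 ≤ d)
    (Γ : Type) [Group Γ] [TopologicalSpace Γ] [IsTopologicalGroup Γ]
    [CompactSpace Γ] [T2Space Γ] [TotallyDisconnectedSpace Γ]
    (E : GPre d Γ 2) (hE : E.IsExt)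
    (hBfree : FdMod.IsFree (E.X 0)) (hE2free : FdMod.IsFree (E.X 2))
    -- first diagram
    (F₁ : Type) [AddCommGroup F₁] [Module (ZMod d) F₁] [Finite F₁]
    (ι : (E.X 0).V →ₗ[ZMod d] F₁) (π : F₁ →ₗ[ZMod d] (E.X 2).V)
    (φ₁ : (E.X 1).V →ₗ[ZMod d] F₁)
    (hι : Function.Injective ι) (hπ : Function.Surjective π)
    (hex : ∀ y, π y = 0 ↔ ∃ x, ι x = y)
    (hc1 : ∀ x, φ₁ ((E.f 0).1 x) = ι x)
    (hc2 : ∀ x, π (φ₁ x) = (E.f 1).1 x)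
    -- second diagram
    (F₁' : Type) [AddCommGroup F₁'] [Module (ZMod d) F₁'] [Finite F₁']
    (ι' : (E.X 0).V →ₗ[ZMod d] F₁') (π' : F₁' →ₗ[ZMod d] (E.X 2).V)
    (φ₁' : (E.X 1).V →ₗ[ZMod d] F₁')
    (hι' : Function.Injective ι') (hπ' : Function.Surjective π')
    (hex' : ∀ y, π' y = 0 ↔ ∃ x, ι' x = y)
    (hc1' : ∀ x, φ₁' ((E.f 0).1 x) = ι' x)
    (hc2' : ∀ x, π' (φ₁' x) = (E.f 1).1 x) :
    ∃ θ : F₁ ≃ₗ[ZMod d] F₁',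
      (∀ x, θ (ι x) = ι' x) ∧ (∀ y, π' (θ y) = π y) ∧ (∀ x, θ (φ₁ x) = φ₁' x) := by
  have hnz : NeZero d := ⟨by omega⟩
  obtain ⟨r, ⟨e2⟩⟩ := hE2free
  obtain ⟨m, ⟨eB⟩⟩ := hBfree
  set f0 : (E.X 0).V →ₗ[ZMod d] (E.X 1).V := (E.f 0).1 with hf0
  set f1 : (E.X 1).V →ₗ[ZMod d] (E.X 2).V := (E.f 1).1 with hf1
  -- sections of π and π'
  obtain ⟨s₀, hs₀⟩ := Module.projective_lifting_property π e2.symm.toLinearMap hπ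
  obtain ⟨s₀', hs₀'⟩ := Module.projective_lifting_property π' e2.symm.toLinearMap hπ'
  set s : (E.X 2).V →ₗ[ZMod d] F₁ := s₀ ∘ₗ e2.toLinearMap with hsdef
  set s' : (E.X 2).V →ₗ[ZMod d] F₁' := s₀' ∘ₗ e2.toLinearMap with hs'def
  have hs : ∀ z, π (s z) = z := fun z => by
    have := LinearMap.congr_fun hs₀ (e2 z)
    simpa [hsdef] using this
  have hs' : ∀ z, π' (s' z) = z := fun z => by
    have := LinearMap.congr_fun hs₀' (e2 z)
    simpa [hs'def] using this
  have πι0 : ∀ x, π (ι x) = 0 := fun x => (hex (ι x)).mpr ⟨x, rfl⟩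
  have π'ι'0 : ∀ x, π' (ι' x) = 0 := fun x => (hex' (ι' x)).mpr ⟨x, rfl⟩
  -- retractions
  have hmem : ∀ y : F₁, y - s (π y) ∈ LinearMap.range ι := fun y => by
    rcases (hex (y - s (π y))).mp (by simp [hs]) with ⟨x, hx⟩
    exact ⟨x, hx⟩
  have hmem' : ∀ y : F₁', y - s' (π' y) ∈ LinearMap.range ι' := fun y => by
    rcases (hex' (y - s' (π' y))).mp (by simp [hs']) with ⟨x, hx⟩
    exact ⟨x, hx⟩
  set q : F₁ →ₗ[ZMod d] LinearMap.range ι :=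
    (LinearMap.id - s ∘ₗ π).codRestrict (LinearMap.range ι) hmem with hq
  set q' : F₁' →ₗ[ZMod d] LinearMap.range ι' :=
    (LinearMap.id - s' ∘ₗ π').codRestrict (LinearMap.range ι') hmem' with hq'
  set rF : F₁ →ₗ[ZMod d] (E.X 0).V :=
    (LinearEquiv.ofInjective ι hι).symm.toLinearMap ∘ₗ q with hrFdef
  set rF' : F₁' →ₗ[ZMod d] (E.X 0).V :=
    (LinearEquiv.ofInjective ι' hι').symm.toLinearMap ∘ₗ q' with hrF'def
  have hrF : ∀ y, ι (rF y) = y - s (π y) := fun y => by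
    have h2 : ι ((LinearEquiv.ofInjective ι hι).symm (q y)) = ((q y : F₁)) := by
      conv_rhs => rw [← LinearEquiv.apply_symm_apply (LinearEquiv.ofInjective ι hι) (q y)]
      rw [LinearEquiv.ofInjective_apply]
    simpa [hrFdef, hq] using h2
  have hrF' : ∀ y, ι' (rF' y) = y - s' (π' y) := fun y => by
    have h2 : ι' ((LinearEquiv.ofInjective ι' hι').symm (q' y)) = ((q' y : F₁')) := by
      conv_rhs => rw [← LinearEquiv.apply_symm_apply (LinearEquiv.ofInjective ι' hι') (q' y)]
      rw [LinearEquiv.ofInjective_apply]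
    simpa [hrF'def, hq'] using h2
  have hrFι : ∀ x, rF (ι x) = x := fun x => by
    apply hι; rw [hrF, πι0, map_zero, sub_zero]
  have hrF'ι' : ∀ x, rF' (ι' x) = x := fun x => by
    apply hι'; rw [hrF', π'ι'0, map_zero, sub_zero]
  -- the basic isomorphism
  set t : F₁ →ₗ[ZMod d] F₁' := ι' ∘ₗ rF + s' ∘ₗ π with htdef
  set t' : F₁' →ₗ[ZMod d] F₁ := ι ∘ₗ rF' + s ∘ₗ π' with ht'def
  have ht : ∀ y, t y = ι' (rF y) + s' (π y) := fun y => rfl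
  have ht' : ∀ z, t' z = ι (rF' z) + s (π' z) := fun z => rfl
  have hπ't : ∀ y, π' (t y) = π y := fun y => by
    rw [ht, map_add, π'ι'0, hs', zero_add]
  have hπt' : ∀ z, π (t' z) = π' z := fun z => by
    rw [ht', map_add, πι0, hs, zero_add]
  have hrF't : ∀ y, rF' (t y) = rF y := fun y => by
    apply hι'
    rw [hrF', hπ't, ht]
    abel
  have hrFt' : ∀ z, rF (t' z) = rF' z := fun z => by
    apply hι
    rw [hrF, hπt', ht']
    abel
  have htt' : ∀ y, t' (t y) = y := fun y => by
    rw [ht', hrF't, hπ't, hrF]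
    abel
  have ht't : ∀ z, t (t' z) = z := fun z => by
    rw [ht, hrFt', hπt', hrF']
    abel
  have htι : ∀ x, t (ι x) = ι' x := fun x => by
    rw [ht, hrFι, πι0, map_zero, add_zero]
  -- the discrepancy on E₁
  set ψ : (E.X 1).V →ₗ[ZMod d] F₁' := t ∘ₗ φ₁ - φ₁' with hψdef
  have hψ : ∀ x, ψ x = t (φ₁ x) - φ₁' x := fun x => rfl
  have hπ'ψ : ∀ x, π' (ψ x) = 0 := fun x => by
    rw [hψ, map_sub, hπ't, hc2, hc2', sub_self]
  set gmap : (E.X 1).V →ₗ[ZMod d] (E.X 0).V := rF' ∘ₗ ψ with hgdef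
  have hι'g : ∀ x, ι' (gmap x) = ψ x := fun x => by
    have : ι' (rF' (ψ x)) = ψ x - s' (π' (ψ x)) := hrF' (ψ x)
    rw [hπ'ψ, map_zero, sub_zero] at this
    simpa [hgdef] using this
  have hgker : ∀ x, f1 x = 0 → gmap x = 0 := fun x hx => by
    obtain ⟨bb, hbb⟩ := (hE.2.2 0 (by norm_num) x).mp hx
    apply hι'
    rw [hι'g, map_zero, hψ, ← hbb]
    rw [show (E.f 0).1 bb = f0 bb from rfl, hc1, hc1', htι, sub_self]
  -- factor gmap through f1
  have hker : LinearMap.ker f1 ≤ LinearMap.ker gmap := fun x hx => by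
    rw [LinearMap.mem_ker] at hx ⊢
    exact hgker x hx
  set h₀ : LinearMap.range f1 →ₗ[ZMod d] (E.X 0).V :=
    (Submodule.liftQ (LinearMap.ker f1) gmap hker) ∘ₗ
      (LinearMap.quotKerEquivRange f1).symm.toLinearMap with hh₀def
  have hh₀ : ∀ x : (E.X 1).V,
      h₀ ⟨f1 x, LinearMap.mem_range_self f1 x⟩ = gmap x := fun x => by
    have h1 : (LinearMap.quotKerEquivRange f1).symm ⟨f1 x, LinearMap.mem_range_self f1 x⟩
        = (LinearMap.ker f1).mkQ x := LinearMap.quotKerEquivRange_symm_apply_image f1 x _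
    rw [hh₀def, LinearMap.comp_apply, LinearEquiv.coe_coe, h1, Submodule.mkQ_apply,
      Submodule.liftQ_apply]
  -- extend to all of E₂ using self-injectivity of ZMod d
  obtain ⟨hbar, hhbar⟩ := extend_free eB (LinearMap.range f1).subtype
    (Submodule.injective_subtype _) h₀
  have hbarf1 : ∀ x, hbar (f1 x) = gmap x := fun x => by
    have := hhbar ⟨f1 x, LinearMap.mem_range_self f1 x⟩
    rw [hh₀ x] at this
    simpa using this
  -- the corrected isomorphism
  set c : F₁' →ₗ[ZMod d] F₁' := ι' ∘ₗ hbar ∘ₗ π' with hcdef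
  have hcc : ∀ z, c z = ι' (hbar (π' z)) := fun z => rfl
  set T : F₁ →ₗ[ZMod d] F₁' := t - ι' ∘ₗ hbar ∘ₗ π with hTdef
  set T' : F₁' →ₗ[ZMod d] F₁ := t' ∘ₗ (LinearMap.id + c) with hT'def
  have hT : ∀ y, T y = t y - ι' (hbar (π y)) := fun y => rfl
  have hT' : ∀ z, T' z = t' (z + c z) := fun z => rfl
  have hπ'T : ∀ y, π' (T y) = π y := fun y => by
    rw [hT, map_sub, hπ't, π'ι'0, sub_zero]
  have hπT' : ∀ z, π (T' z) = π' z := fun z => by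
    rw [hT', hπt', map_add, hcc, π'ι'0, add_zero]
  have hTT' : ∀ y, T' (T y) = y := fun y => by
    have : T y + c (T y) = t y := by
      rw [hcc, hπ'T, hT]
      abel
    rw [hT', this, htt']
  have hT'T : ∀ z, T (T' z) = z := fun z => by
    have h1 : t (T' z) = z + c z := by rw [hT', ht't]
    have h2 : π (T' z) = π' z := hπT' z
    rw [hT, h1, h2, hcc]
    abel
  refine ⟨LinearEquiv.ofLinear T T'
    (LinearMap.ext fun z => hT'T z) (LinearMap.ext fun y => hTT' y), ?_, ?_, ?_⟩
  · intro x
    show T (ι x) = ι' x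
    rw [hT, htι, πι0]
    simp
  · intro y
    show π' (T y) = π y
    exact hπ'T y
  · intro x
    show T (φ₁ x) = φ₁' x
    rw [hT, hc2, show (E.f 1).1 x = f1 x from rfl, hbarf1, hι'g, hψ]
    abel
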